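/- Let $b$ be a nondegenerate symmetric bilinear form on a finite-dimensional vector space over a finite field $\mathbb{F}_q$ of odd characteristic. Then there exists a basis in which the matrix of $b$ is diagonal with all diagonal entries equal to $1$, except possibly the last one, which equals a fixed nonsquare $s\in\mathbb{F}_q^\times$. -/

import Mathlib

open Matrix

section Helpers

variable {F : Type*} [Field F] {n : ℕ}

private lemma sum_two_support {i j : Fin n} (hij : i ≠ j)
    (u v : F) (f : Fin n → F) :
    ∑ r, (if r = i then u else if r = j then v else 0) * f r = u * f i + v * f j := by
  have h : ∀ r : Fin n, (if r = i then u else if r = j then v else 0) * f r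
      = (if r = i then u * f i else 0) + (if r = j then v * f j else 0) := by
    intro r
    by_cases h1 : r = i
    · subst h1; simp [hij]
    · by_cases h2 : r = j <;> simp [h1, h2, Ne.symm hij]
  rw [Finset.sum_congr rfl fun r _ => h r, Finset.sum_add_distrib]
  simp

private lemma sum_single_support (p : Fin n) (f : Fin n → F) :
    ∑ r, (if p = r then (1 : F) else 0) * f r = f p := by
  simp

private lemma rotation_step (e : Fin n → F) (i j : Fin n) (hij : i ≠ j)
    (x y : F) (hxy : e i * x ^ 2 + e j * y ^ 2 = 1) :
    ∃ G : Matrix (Fin n) (Fin n) F, IsUnit G.det ∧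
      G * Matrix.diagonal e * Gᵀ
        = Matrix.diagonal (fun p => if p = i then 1 else if p = j then e i * e j else e p) := by
  set G : Matrix (Fin n) (Fin n) F := Matrix.of fun p q =>
    if p = i then (if q = i then x else if q = j then y else 0)
    else if p = j then (if q = i then -(e j) * y else if q = j then e i * x else 0)
    else (if p = q then 1 else 0) with hG
  have hGi : ∀ q, G i q = (if q = i then x else if q = j then y else 0) := by
    intro q; simp [hG]
  have hGj : ∀ q, G j q =
      (if q = i then -(e j) * y else if q = j then e i * x else 0) := by
    intro q; simp [hG, hij, Ne.symm hij]
  have hGo : ∀ p q, p ≠ i → p ≠ j → G p q = (if p = q then 1 else 0) := by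
    intro p q h1 h2; simp [hG, h1, h2]
  set H : Matrix (Fin n) (Fin n) F := Matrix.of fun p q =>
    if p = i then (if q = i then e i * x else if q = j then -y else 0)
    else if p = j then (if q = i then e j * y else if q = j then x else 0)
    else (if p = q then 1 else 0) with hH
  have hHi : ∀ q, H i q = (if q = i then e i * x else if q = j then -y else 0) := by
    intro q; simp [hH]
  have hHj : ∀ q, H j q = (if q = i then e j * y else if q = j then x else 0) := by
    intro q; simp [hH, hij, Ne.symm hij]
  have hHo : ∀ p q, p ≠ i → p ≠ j → H p q = (if p = q then 1 else 0) := by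
    intro p q h1 h2; simp [hH, h1, h2]
  refine ⟨G, ?_, ?_⟩
  · apply Matrix.isUnit_det_of_right_inverse (B := H)
    ext p q
    rw [Matrix.mul_apply]
    rcases eq_or_ne p i with hp | hp
    · rw [hp, Finset.sum_congr rfl fun r _ => by rw [hGi r], sum_two_support hij]
      rw [hHi, hHj, Matrix.one_apply]
      rcases eq_or_ne q i with hq | hq
      · rw [hq]; simp [hij, Ne.symm hij]; linear_combination hxy
      · rcases eq_or_ne q j with hq2 | hq2
        · rw [hq2]; simp [hij, Ne.symm hij]; ring
        · simp [hq, hq2, Ne.symm hq, Ne.symm hq2]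
    · rcases eq_or_ne p j with hp2 | hp2
      · rw [hp2, Finset.sum_congr rfl fun r _ => by rw [hGj r], sum_two_support hij]
        rw [hHi, hHj, Matrix.one_apply]
        rcases eq_or_ne q i with hq | hq
        · rw [hq]; simp [hij, Ne.symm hij]; ring
        · rcases eq_or_ne q j with hq2 | hq2
          · rw [hq2]; simp [hij, Ne.symm hij]; linear_combination hxy
          · simp [hq, hq2, Ne.symm hq, Ne.symm hq2]
      · rw [Finset.sum_congr rfl fun r _ => by
            rw [hGo p r hp hp2], sum_single_support p fun r => H r q]
        rw [hHo p q hp hp2, Matrix.one_apply]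
  · have key : ∀ p q, (G * Matrix.diagonal e * Gᵀ) p q = ∑ r, G p r * (e r * G q r) := by
      intro p q
      rw [Matrix.mul_apply]
      refine Finset.sum_congr rfl fun r _ => ?_
      rw [Matrix.mul_diagonal, Matrix.transpose_apply]
      ring
    ext p q
    rw [key, Matrix.diagonal_apply]
    rcases eq_or_ne p i with hp | hp
    · rw [hp, Finset.sum_congr rfl fun r _ => by rw [hGi r], sum_two_support hij]
      rcases eq_or_ne q i with hq | hq
      · rw [hq, hGi, hGi]; simp [hij, Ne.symm hij]; linear_combination hxy
      · rcases eq_or_ne q j with hq2 | hq2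
        · rw [hq2, hGj, hGj]; simp [hij, Ne.symm hij]; ring
        · rw [hGo q i hq hq2, hGo q j hq hq2]
          simp [hq, hq2, Ne.symm hq, Ne.symm hq2]
    · rcases eq_or_ne p j with hp2 | hp2
      · rw [hp2, Finset.sum_congr rfl fun r _ => by rw [hGj r], sum_two_support hij]
        rcases eq_or_ne q i with hq | hq
        · rw [hq, hGi, hGi]; simp [hij, Ne.symm hij]; ring
        · rcases eq_or_ne q j with hq2 | hq2
          · rw [hq2, hGj, hGj]; simp [hij, Ne.symm hij]
            linear_combination e i * e j * hxy
          · rw [hGo q i hq hq2, hGo q j hq hq2]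
            simp [hq, hq2, Ne.symm hq, Ne.symm hq2]
      · rw [Finset.sum_congr rfl fun r _ => by
            rw [hGo p r hp hp2], sum_single_support p fun r => e r * G q r]
        rcases eq_or_ne q i with hq | hq
        · rw [hq, hGi]; simp [hp, hp2, Ne.symm hp]
        · rcases eq_or_ne q j with hq2 | hq2
          · rw [hq2, hGj]; simp [hp, hp2, Ne.symm hp2]
          · rw [hGo q p hq hq2]
            rcases eq_or_ne p q with hpq | hpq
            · rw [hpq]; simp [hq, hq2, hpq ▸ hp, hpq ▸ hp2]
            · simp [hpq, Ne.symm hpq, hp, hp2]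

end Helpers


private lemma exists_sol {F : Type*} [Field F] [Fintype F] (hq : Fintype.card F % 2 = 1)
    {a b : F} (ha : a ≠ 0) (hb : b ≠ 0) : ∃ x y : F, a * x ^ 2 + b * y ^ 2 = 1 := by
  classical
  have h2 : (Polynomial.C b * Polynomial.X ^ 2 : Polynomial F).degree = 2 := by
    rw [Polynomial.degree_C_mul_X_pow _ hb]; rfl
  obtain ⟨x, y, hxy⟩ := FiniteField.exists_root_sum_quadratic
    (f := Polynomial.C a * Polynomial.X ^ 2)
    (g := Polynomial.C b * Polynomial.X ^ 2 - Polynomial.C 1)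
    (by rw [Polynomial.degree_C_mul_X_pow _ ha]; rfl)
    (by rw [Polynomial.degree_sub_C (by rw [h2]; norm_num), h2]) hq
  refine ⟨x, y, ?_⟩
  simp only [Polynomial.eval_mul, Polynomial.eval_pow, Polynomial.eval_C, Polynomial.eval_X,
    Polynomial.eval_sub, Polynomial.eval_one] at hxy
  linear_combination hxy

private lemma reduce_diag {F : Type*} [Field F] [Fintype F] (hq : Fintype.card F % 2 = 1)
    {n : ℕ} (d : Fin n → F) (hd : ∀ i, d i ≠ 0) (k : ℕ) (hk : k < n) :
    ∃ (A : Matrix (Fin n) (Fin n) F) (c : F), IsUnit A.det ∧ c ≠ 0 ∧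
      A * Matrix.diagonal d * Aᵀ
        = Matrix.diagonal
            (fun i : Fin n => if (i : ℕ) < k then 1 else if (i : ℕ) = k then c else d i) := by
  induction k with
  | zero =>
    refine ⟨1, d ⟨0, hk⟩, by simp, hd _, ?_⟩
    have hfun : d = fun i : Fin n =>
        if (i : ℕ) < 0 then 1 else if (i : ℕ) = 0 then d ⟨0, hk⟩ else d i := by
      funext i
      by_cases h : (i : ℕ) = 0
      · have h2 : i = ⟨0, hk⟩ := Fin.ext h
        simp [h, h2]
      · simp [h]
    rw [Matrix.one_mul, Matrix.transpose_one, Matrix.mul_one, ← hfun]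
  | succ k ih =>
    have hk' : k < n := Nat.lt_of_succ_lt hk
    obtain ⟨A, c, hA, hc, hAd⟩ := ih hk'
    set ik : Fin n := ⟨k, hk'⟩ with hik
    set jk : Fin n := ⟨k + 1, hk⟩ with hjk
    have hij : ik ≠ jk := by simp [hik, hjk, Fin.ext_iff]
    set e : Fin n → F :=
      fun i : Fin n => if (i : ℕ) < k then 1 else if (i : ℕ) = k then c else d i with he
    have hei : e ik = c := by simp [he, hik]
    have hej : e jk = d jk := by simp [he, hjk]
    obtain ⟨x, y, hxy⟩ := exists_sol hq hc (hd jk)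
    obtain ⟨G, hG, hGe⟩ := rotation_step e ik jk hij x y (by rw [hei, hej]; exact hxy)
    refine ⟨G * A, c * d jk, ?_, mul_ne_zero hc (hd jk), ?_⟩
    · rw [Matrix.det_mul]; exact hG.mul hA
    · have hassoc : G * A * Matrix.diagonal d * (G * A)ᵀ
          = G * (A * Matrix.diagonal d * Aᵀ) * Gᵀ := by
        rw [Matrix.transpose_mul]
        simp only [Matrix.mul_assoc]
      rw [hassoc, hAd, hGe]
      have hfun : (fun p => if p = ik then 1 else if p = jk then e ik * e jk else e p)
          = fun i : Fin n =>
            if (i : ℕ) < k + 1 then 1 else if (i : ℕ) = k + 1 then c * d jk else d i := by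
        funext p
        rcases eq_or_ne p ik with hp | hp
        · have h0 : (p : ℕ) = k := by rw [hp]
          have h1 : (p : ℕ) < k + 1 := by omega
          simp [hp, h1, hei, hej, show (ik : ℕ) = k from rfl]
        · rcases eq_or_ne p jk with hp2 | hp2
          · have h1 : (p : ℕ) = k + 1 := by rw [hp2]
            have h2 : ¬ (p : ℕ) < k + 1 := by omega
            simp [hp, hp2, hei, hej, h1, h2, hij, Ne.symm hij, show (jk : ℕ) = k + 1 from rfl]
          · have h1 : (p : ℕ) ≠ k := fun h => hp (Fin.ext h)
            have h2 : (p : ℕ) ≠ k + 1 := fun h => hp2 (Fin.ext h)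
            simp only [if_neg hp, if_neg hp2, he]
            by_cases h3 : (p : ℕ) < k
            · have h4 : (p : ℕ) < k + 1 := by omega
              simp [h3, h4]
            · have h4 : ¬ (p : ℕ) < k + 1 := by omega
              simp [h3, h4, h1, h2]
      rw [hfun]

theorem diagonalization_finite_field
    (F : Type*) [Field F] [Fintype F] (hq : Odd (Fintype.card F))
    (n : ℕ) (hn : 0 < n)
    (s : F) (hs : ¬ IsSquare s) (hs0 : s ≠ 0)
    (M : Matrix (Fin n) (Fin n) F) (hM : M.IsSymm) (hMdet : IsUnit M.det) :
    ∃ A : Matrix (Fin n) (Fin n) F, IsUnit A.det ∧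
      (A * M * Aᵀ = 1 ∨
       A * M * Aᵀ = Matrix.diagonal (fun i : Fin n => if (i : ℕ) = n - 1 then s else 1)) := by
  classical
  have hcard : Fintype.card F % 2 = 1 := Nat.odd_iff.mp hq
  have hchar : ringChar F ≠ 2 := by
    intro h
    rw [FiniteField.even_card_iff_char_two.mp h] at hcard
    exact absurd hcard (by omega)
  haveI : Invertible (2 : F) := invertibleOfNonzero (Ring.two_ne_zero hchar)
  -- the bilinear form associated to M
  set B : (Fin n → F) →ₗ[F] (Fin n → F) →ₗ[F] F := Matrix.toLinearMap₂' F M with hB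
  have hBsymm : B.IsSymm := by
    refine ⟨fun x y => ?_⟩
    rw [RingHom.id_apply, hB, Matrix.toLinearMap₂'_apply, Matrix.toLinearMap₂'_apply,
      Finset.sum_comm]
    refine Finset.sum_congr rfl fun i _ => Finset.sum_congr rfl fun j _ => ?_
    rw [hM.apply i j]
    simp only [smul_eq_mul]
    ring
  obtain ⟨v, hv⟩ := LinearMap.BilinForm.exists_orthogonal_basis hBsymm
  set v' : Module.Basis (Fin n) F (Fin n → F) :=
    v.reindex (finCongr (Module.finrank_fin_fun F)) with hv'
  have hv'ortho : ∀ i j : Fin n, i ≠ j → B (v' i) (v' j) = 0 := by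
    intro i j hij
    rw [hv', Module.Basis.reindex_apply, Module.Basis.reindex_apply]
    exact hv (fun h => hij (by simpa using congrArg (finCongr (Module.finrank_fin_fun F)) h))
  set A₀ : Matrix (Fin n) (Fin n) F := Matrix.of fun i j => v' i j with hA₀def
  have hA₀ : IsUnit A₀.det := by
    have ht : A₀ᵀ = (Pi.basisFun F (Fin n)).toMatrix ⇑v' := by
      ext i j
      rw [Module.Basis.toMatrix_apply]
      simp [hA₀def]
    have hu := (Pi.basisFun F (Fin n)).isUnit_det v'
    rw [Module.Basis.det_apply, ← ht, Matrix.det_transpose] at hu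
    exact hu
  set d : Fin n → F := fun i => B (v' i) (v' i) with hd'
  have hdiag : A₀ * M * A₀ᵀ = Matrix.diagonal d := by
    have hB_eq : ∀ i j, (A₀ * M * A₀ᵀ) i j = B (v' i) (v' j) := by
      intro i j
      rw [hB, Matrix.toLinearMap₂'_apply, Matrix.mul_apply]
      simp_rw [Matrix.mul_apply, Matrix.transpose_apply, Finset.sum_mul, smul_eq_mul]
      rw [Finset.sum_comm]
      refine Finset.sum_congr rfl fun k _ => Finset.sum_congr rfl fun l _ => ?_
      simp [hA₀def]
      ring
    ext i j
    rw [hB_eq, Matrix.diagonal_apply]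
    rcases eq_or_ne i j with h | h
    · simp [h, hd']
    · simp [h, hv'ortho i j h]
  have hd : ∀ i, d i ≠ 0 := by
    have hu : IsUnit (Matrix.diagonal d).det := by
      rw [← hdiag, Matrix.det_mul, Matrix.det_mul, Matrix.det_transpose]
      exact (hA₀.mul hMdet).mul hA₀
    rw [Matrix.det_diagonal] at hu
    intro i hi
    rw [isUnit_iff_ne_zero] at hu
    exact hu (Finset.prod_eq_zero (Finset.mem_univ i) hi)
  obtain ⟨A₁, c, hA₁, hc, hA₁d⟩ := reduce_diag hcard d hd (n - 1) (by omega)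
  have hfix : (fun i : Fin n => if (i : ℕ) < n - 1 then 1 else if (i : ℕ) = n - 1 then c else d i)
      = fun i : Fin n => if (i : ℕ) = n - 1 then c else 1 := by
    funext i
    have := i.isLt
    by_cases h : (i : ℕ) = n - 1
    · simp [h]
    · have h2 : (i : ℕ) < n - 1 := by omega
      simp [h, h2]
  have hcomb : (A₁ * A₀) * M * (A₁ * A₀)ᵀ
      = Matrix.diagonal (fun i : Fin n => if (i : ℕ) = n - 1 then c else 1) := by
    have : (A₁ * A₀) * M * (A₁ * A₀)ᵀ = A₁ * (A₀ * M * A₀ᵀ) * A₁ᵀ := by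
      rw [Matrix.transpose_mul]
      simp only [Matrix.mul_assoc]
    rw [this, hdiag, hA₁d, hfix]
  have hA₁₀ : IsUnit (A₁ * A₀).det := by
    rw [Matrix.det_mul]; exact hA₁.mul hA₀
  -- scaling the last entry
  have scale : ∀ t : F, t ≠ 0 →
      ∃ S : Matrix (Fin n) (Fin n) F, IsUnit S.det ∧
        S * Matrix.diagonal (fun i : Fin n => if (i : ℕ) = n - 1 then c else 1) * Sᵀ
          = Matrix.diagonal (fun i : Fin n => if (i : ℕ) = n - 1 then t ^ 2 * c else 1) := by
    intro t ht
    refine ⟨Matrix.diagonal (fun i : Fin n => if (i : ℕ) = n - 1 then t else 1), ?_, ?_⟩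
    · rw [Matrix.det_diagonal, isUnit_iff_ne_zero]
      rw [Finset.prod_ne_zero_iff]
      intro i _
      by_cases h : (i : ℕ) = n - 1 <;> simp [h, ht]
    · rw [Matrix.diagonal_transpose, Matrix.diagonal_mul_diagonal, Matrix.diagonal_mul_diagonal]
      refine congrArg Matrix.diagonal (funext fun i => ?_)
      by_cases h : (i : ℕ) = n - 1 <;> simp [h] <;> ring
  rcases em (IsSquare c) with hsq | hsq
  · obtain ⟨r, hr⟩ := hsq
    have hr0 : r ≠ 0 := by rintro rfl; rw [mul_zero] at hr; exact hc hr
    obtain ⟨S, hS, hSe⟩ := scale r⁻¹ (inv_ne_zero hr0)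
    refine ⟨S * (A₁ * A₀), by rw [Matrix.det_mul]; exact hS.mul hA₁₀, Or.inl ?_⟩
    have : S * (A₁ * A₀) * M * (S * (A₁ * A₀))ᵀ
        = S * ((A₁ * A₀) * M * (A₁ * A₀)ᵀ) * Sᵀ := by
      rw [Matrix.transpose_mul]
      simp only [Matrix.mul_assoc]
    rw [this, hcomb, hSe]
    have : (fun i : Fin n => if (i : ℕ) = n - 1 then (r⁻¹) ^ 2 * c else 1)
        = fun _ : Fin n => (1 : F) := by
      funext i
      by_cases h : (i : ℕ) = n - 1
      · simp only [h, if_pos]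
        rw [hr]
        field_simp
      · simp [h]
    rw [this, Matrix.diagonal_one]
  · -- c is a nonsquare, hence c = s * r ^ 2
    have hdich : ∀ a : F, a ≠ 0 → ¬ IsSquare a → a ^ (Fintype.card F / 2) = -1 := by
      intro a ha hasq
      rcases FiniteField.pow_dichotomy hchar ha with h | h
      · exact absurd ((FiniteField.isSquare_iff hchar ha).mpr h) hasq
      · exact h
    have hcs : IsSquare (c * s⁻¹) := by
      refine (FiniteField.isSquare_iff hchar (mul_ne_zero hc (inv_ne_zero hs0))).mpr ?_
      rw [mul_pow, hdich c hc hsq, inv_pow, hdich s hs0 hs]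
      norm_num
    obtain ⟨r, hr⟩ := hcs
    have hr0 : r ≠ 0 := by
      rintro rfl
      rw [mul_zero] at hr
      exact (mul_ne_zero hc (inv_ne_zero hs0)) hr
    obtain ⟨S, hS, hSe⟩ := scale r⁻¹ (inv_ne_zero hr0)
    refine ⟨S * (A₁ * A₀), by rw [Matrix.det_mul]; exact hS.mul hA₁₀, Or.inr ?_⟩
    have : S * (A₁ * A₀) * M * (S * (A₁ * A₀))ᵀ
        = S * ((A₁ * A₀) * M * (A₁ * A₀)ᵀ) * Sᵀ := by
      rw [Matrix.transpose_mul]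
      simp only [Matrix.mul_assoc]
    rw [this, hcomb, hSe]
    have : (fun i : Fin n => if (i : ℕ) = n - 1 then (r⁻¹) ^ 2 * c else 1)
        = fun i : Fin n => if (i : ℕ) = n - 1 then s else 1 := by
      funext i
      by_cases h : (i : ℕ) = n - 1
      · simp only [h, if_pos]
        have hc' : c = r * r * s := by
          field_simp at hr
          linear_combination hr
        rw [hc']
        field_simp
      · simp [h]
    rw [this]
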